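/- Let (V, ≤, ℓ) be a finite {a, b}-labeled DAG. Then V has a topological sort whose achieved word contains aa as a factor if and only if there exist distinct vertices v₁, v₂ with ℓ(v₁) = ℓ(v₂) = a such that either v₁ and v₂ are incomparable, or v₁ < v₂ and there is no vertex w with v₁ < w < v₂. -/

import Mathlib

namespace CTS

/-- The two-letter alphabet `{a, b}`. -/
inductive AB : Type
  | a : AB
  | b : AB
deriving DecidableEq

/-- A topological sort of the finite partial order `V`: a duplicate-free list containing
every element, such that whenever `u < v`, `u` occurs before `v`. -/
def IsTopSort {V : Type*} [PartialOrder V] (σ : List V) : Prop :=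
  σ.Nodup ∧ (∀ v : V, v ∈ σ) ∧ σ.Pairwise (fun u v => ¬ v < u)

/-- Auxiliary: build a topological sort in which `v₁, v₂` are adjacent,
given a suitable "down set" `D`. -/
lemma exists_adjacent_topsort {V : Type*} [Fintype V] [PartialOrder V]
    (v₁ v₂ : V) (hne : v₁ ≠ v₂) (h21 : ¬ v₂ < v₁)
    (D : V → Prop) (hlow : ∀ u w : V, u < w → D w → D u)
    (h1 : ¬ D v₁) (h2 : ¬ D v₂)
    (hR : ∀ y : V, ¬ D y → y ≠ v₁ → y ≠ v₂ → ¬ y < v₁ ∧ ¬ y < v₂) :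
    ∃ l r : List V, IsTopSort (l ++ v₁ :: v₂ :: r) := by
  classical
  obtain ⟨s, hlin, hext⟩ := extend_partialOrder ((· ≤ ·) : V → V → Prop)
  haveI := hlin.toIsPartialOrder
  haveI := hlin.toTotal
  set τ : List V := Finset.univ.sort s with hτ
  have hτs : τ.Pairwise s := Finset.pairwise_sort (r := s) _
  have hτnd : τ.Nodup := Finset.sort_nodup (r := s) _
  have hτmem : ∀ v : V, v ∈ τ := fun v => (Finset.mem_sort s).2 (Finset.mem_univ v)
  have hτtop : τ.Pairwise (fun u v => ¬ v < u) := by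
    refine hτs.imp ?_
    intro u v huv hvu
    have hsvu : s v u := hext _ _ hvu.le
    exact hvu.ne (antisymm huv hsvu).symm
  set l : List V := τ.filter (fun v => decide (D v)) with hl
  set r : List V := τ.filter (fun v => decide (¬ D v ∧ v ≠ v₁ ∧ v ≠ v₂)) with hr
  have hml : ∀ x : V, x ∈ l ↔ D x := by
    intro x; simp [hl, List.mem_filter, hτmem]
  have hmr : ∀ x : V, x ∈ r ↔ (¬ D x ∧ x ≠ v₁ ∧ x ≠ v₂) := by
    intro x; simp [hr, List.mem_filter, hτmem]
  refine ⟨l, r, ?_, ?_, ?_⟩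
  · -- Nodup
    rw [List.nodup_append']
    refine ⟨hτnd.filter _, ?_, ?_⟩
    · simp only [List.nodup_cons]
      refine ⟨?_, ?_, hτnd.filter _⟩
      · simp only [List.mem_cons]
        rintro (rfl | hm)
        · exact hne rfl
        · exact ((hmr v₁).1 hm).2.1 rfl
      · intro hm
        exact ((hmr v₂).1 hm).2.2 rfl
    · intro x hx hy
      have hDx := (hml x).1 hx
      simp only [List.mem_cons] at hy
      rcases hy with rfl | rfl | hy
      · exact h1 hDx
      · exact h2 hDx
      · exact ((hmr x).1 hy).1 hDx
  · -- membership
    intro v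
    by_cases hD : D v
    · exact List.mem_append.2 (Or.inl ((hml v).2 hD))
    by_cases hv1 : v = v₁
    · subst hv1; simp
    by_cases hv2 : v = v₂
    · subst hv2; simp
    · refine List.mem_append.2 (Or.inr ?_)
      simp only [List.mem_cons]
      exact Or.inr (Or.inr ((hmr v).2 ⟨hD, hv1, hv2⟩))
  · -- pairwise
    rw [List.pairwise_append]
    refine ⟨hτtop.sublist List.filter_sublist, ?_, ?_⟩
    · simp only [List.pairwise_cons]
      refine ⟨?_, ?_, hτtop.sublist List.filter_sublist⟩
      · intro y hy
        simp only [List.mem_cons] at hy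
        rcases hy with rfl | hy
        · exact h21
        · exact (hR y ((hmr y).1 hy).1 ((hmr y).1 hy).2.1 ((hmr y).1 hy).2.2).1
      · intro y hy
        exact (hR y ((hmr y).1 hy).1 ((hmr y).1 hy).2.1 ((hmr y).1 hy).2.2).2
    · intro x hx y hy hyx
      have hDx := (hml x).1 hx
      have hDy : D y := hlow y x hyx hDx
      simp only [List.mem_cons] at hy
      rcases hy with rfl | rfl | hy
      · exact h1 hDy
      · exact h2 hDy
      · exact ((hmr y).1 hy).1 hDy

/-- a finite `{a,b}`-labeled DAG has a topological sort whose achieved word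
contains `aa` as a factor iff there are two distinct `a`-labeled vertices that are either
incomparable, or comparable with nothing strictly between them. -/
theorem stmt11 {V : Type*} [Fintype V] [PartialOrder V] (ℓ : V → AB) :
    (∃ σ : List V, IsTopSort σ ∧
        ∃ p s : List AB, σ.map ℓ = p ++ [AB.a, AB.a] ++ s) ↔
      ∃ v₁ v₂ : V, v₁ ≠ v₂ ∧ ℓ v₁ = AB.a ∧ ℓ v₂ = AB.a ∧
        ((¬ v₁ ≤ v₂ ∧ ¬ v₂ ≤ v₁) ∨ (v₁ < v₂ ∧ ¬ ∃ w : V, v₁ < w ∧ w < v₂)) := by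
  classical
  constructor
  · rintro ⟨σ, ⟨hnd, hmem, hpw⟩, p, s, hmap⟩
    rw [List.append_assoc, List.map_eq_append_iff] at hmap
    obtain ⟨l, m, rfl, -, hm⟩ := hmap
    rw [List.map_eq_append_iff] at hm
    obtain ⟨m₁, r, rfl, hm₁, -⟩ := hm
    rw [List.map_eq_cons_iff] at hm₁
    obtain ⟨v₁, m₁', rfl, hℓ1, hm₁'⟩ := hm₁
    rw [List.map_eq_cons_iff] at hm₁'
    obtain ⟨v₂, m₁'', rfl, hℓ2, hm₁''⟩ := hm₁'
    have : m₁'' = [] := List.map_eq_nil_iff.mp hm₁''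
    subst this
    simp only [List.cons_append, List.nil_append] at hnd hpw hmem
    obtain ⟨-, hndm, -⟩ := List.nodup_append'.mp hnd
    obtain ⟨hcl, hmid, hcross⟩ := List.pairwise_append.mp hpw
    obtain ⟨hv₁, hmid2⟩ := List.pairwise_cons.mp hmid
    obtain ⟨hv₂, -⟩ := List.pairwise_cons.mp hmid2
    have hne : v₁ ≠ v₂ := by
      have := (List.nodup_cons.mp hndm).1
      exact fun h => this (h ▸ List.mem_cons_self)
    have h21 : ¬ v₂ < v₁ := hv₁ v₂ (List.mem_cons_self)
    refine ⟨v₁, v₂, hne, hℓ1, hℓ2, ?_⟩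
    by_cases h12 : v₁ ≤ v₂
    · refine Or.inr ⟨lt_of_le_of_ne h12 hne, ?_⟩
      rintro ⟨w, hw1, hw2⟩
      rcases List.mem_append.mp (hmem w) with hw | hw
      · exact hcross w hw v₁ (List.mem_cons_self) hw1
      · rcases List.mem_cons.mp hw with rfl | hw
        · exact hw1.ne rfl
        · rcases List.mem_cons.mp hw with rfl | hw
          · exact hw2.ne rfl
          · exact hv₂ w hw hw2
    · refine Or.inl ⟨h12, fun h => ?_⟩
      exact h21 (lt_of_le_of_ne h (fun e => hne e.symm))
  · rintro ⟨v₁, v₂, hne, hℓ1, hℓ2, hcase⟩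
    rcases hcase with ⟨h12, h21⟩ | ⟨hlt, hcov⟩
    · obtain ⟨l, r, hts⟩ := exists_adjacent_topsort v₁ v₂ hne
        (fun h => h21 h.le) (fun y => y < v₁ ∨ y < v₂)
        (by rintro u w huw (h | h); exacts [Or.inl (huw.trans h), Or.inr (huw.trans h)])
        (by rintro (h | h); exacts [h.ne rfl, h12 h.le])
        (by rintro (h | h); exacts [h21 h.le, h.ne rfl])
        (by intro y hy _ _; exact ⟨fun h => hy (Or.inl h), fun h => hy (Or.inr h)⟩)
      exact ⟨l ++ v₁ :: v₂ :: r, hts, l.map ℓ, r.map ℓ, by simp [hℓ1, hℓ2]⟩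
    · obtain ⟨l, r, hts⟩ := exists_adjacent_topsort v₁ v₂ hne
        (fun h => (asymm hlt) h) (fun y => y < v₂ ∧ y ≠ v₁)
        (by rintro u w huw ⟨hw, hw1⟩
            refine ⟨huw.trans hw, fun e => ?_⟩
            subst e
            exact hcov ⟨w, huw, hw⟩)
        (by rintro ⟨-, h⟩; exact h rfl)
        (by rintro ⟨h, -⟩; exact h.ne rfl)
        (by intro y hy hy1 _
            have h2 : ¬ y < v₂ := fun h => hy ⟨h, hy1⟩
            exact ⟨fun h => h2 (h.trans hlt), h2⟩)
      exact ⟨l ++ v₁ :: v₂ :: r, hts, l.map ℓ, r.map ℓ, by simp [hℓ1, hℓ2]⟩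

end CTS
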